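/- If there exists a pseudoline with respect to a planar embedded graph G = (V,E) passing through exactly the vertices of a set S ⊆ V, then the subgraph of G induced by S is a linear forest, i.e., a disjoint union of simple paths. -/

import Mathlib

open Set

open scoped Classical

noncomputable section

/-- The plane. -/
abbrev Pt : Type := EuclideanSpace ℝ (Fin 2)

/-- A (topologically) planar embedded graph: vertices are points of the plane,
edges are drawn as simple arcs that pairwise intersect only in common endpoints
and pass through no other vertex. -/
structure EmbeddedGraph (V : Type) where
  pos : V → Pt
  posInj : Function.Injective pos
  G : SimpleGraph V
  arc : ∀ ⦃u v : V⦄, G.Adj u v → Set Pt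
  arc_symm : ∀ {u v : V} (h : G.Adj u v), arc h = arc h.symm
  arc_curve : ∀ {u v : V} (h : G.Adj u v), ∃ γ : ℝ → Pt,
    ContinuousOn γ (Icc 0 1) ∧ InjOn γ (Icc 0 1) ∧
    γ 0 = pos u ∧ γ 1 = pos v ∧ γ '' (Icc 0 1) = arc h
  arc_inter : ∀ {u v x y : V} (h : G.Adj u v) (h' : G.Adj x y),
    (s(u, v) : Sym2 V) ≠ s(x, y) →
      arc h ∩ arc h' ⊆ ({pos u, pos v} : Set Pt) ∩ {pos x, pos y}
  arc_vertex : ∀ {u v : V} (h : G.Adj u v) (w : V), pos w ∈ arc h → w = u ∨ w = v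

namespace EmbeddedGraph

variable {V : Type} (E : EmbeddedGraph V)

/-- The closed point set covered by the drawing of the graph. -/
def image : Set Pt := (range E.pos) ∪ ⋃ (u : V) (v : V) (h : E.G.Adj u v), E.arc h

/-- A pseudoline with respect to an embedded graph: a simple curve going to
infinity on both ends that contains each edge entirely or meets it in at most
one point. -/
def IsPseudoline (c : ℝ → Pt) : Prop :=
  Continuous c ∧ Function.Injective c ∧
    Filter.Tendsto c (Filter.cocompact ℝ) (Filter.cocompact Pt) ∧
    ∀ {u v : V} (h : E.G.Adj u v),
      E.arc h ⊆ range c ∨ (E.arc h ∩ range c).Subsingleton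

/-- An arrangement of `k` pairwise crossing pseudolines with respect to `E`. -/
def IsArrangement {k : ℕ} (A : Fin k → ℝ → Pt) : Prop :=
  (∀ i, E.IsPseudoline (A i)) ∧
    ∀ i j, i ≠ j → ∃ p : Pt, range (A i) ∩ range (A j) = {p}

/-- The open interior of an edge. -/
def arcInterior {u v : V} (h : E.G.Adj u v) : Set Pt :=
  E.arc h \ {E.pos u, E.pos v}

variable {k : ℕ} (A : Fin k → ℝ → Pt)

/-- A vertex lying on some pseudoline. -/
def AlignedVertex (v : V) : Prop := ∃ i, E.pos v ∈ range (A i)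

def FreeVertex (v : V) : Prop := ¬ E.AlignedVertex A v

/-- An edge lying entirely on some pseudoline. -/
def EdgeAligned {u v : V} (h : E.G.Adj u v) : Prop := ∃ i, E.arc h ⊆ range (A i)

/-- The pseudolines crossing the interior of an edge (not containing it). -/
def crossedSet {u v : V} (h : E.G.Adj u v) : Set (Fin k) :=
  {i | (E.arcInterior h ∩ range (A i)).Nonempty ∧ ¬ E.arc h ⊆ range (A i)}

/-- The number of endpoints of an edge anchored on (distinct) pseudolines not
containing the edge. -/
def anchorNum {u v : V} (h : E.G.Adj u v) : ℕ :=
  if ∃ i j, i ≠ j ∧ E.pos u ∈ range (A i) ∧ E.pos v ∈ range (A j) ∧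
      ¬ E.arc h ⊆ range (A i) ∧ ¬ E.arc h ⊆ range (A j) then 2
  else if (∃ i, E.pos u ∈ range (A i) ∧ ¬ E.arc h ⊆ range (A i)) ∨
      (∃ i, E.pos v ∈ range (A i) ∧ ¬ E.arc h ⊆ range (A i)) then 1
  else 0

/-- An edge is admissible for the bound `l` (`none` = this kind of edge is
forbidden, `some m` = at most `m`-crossed). -/
def edgeOk (l : Option ℕ) {u v : V} (h : E.G.Adj u v) : Prop :=
  ∃ m, l = some m ∧ (E.crossedSet A h).ncard ≤ m

/-- Alignment complexity `(l0, l1, l2)`. -/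
def HasComplexity (l0 l1 l2 : Option ℕ) : Prop :=
  ∀ {u v : V} (h : E.G.Adj u v),
    E.edgeOk A (if E.anchorNum A h = 0 then l0
      else if E.anchorNum A h = 1 then l1 else l2) h

/-- A free edge: no endpoint on a pseudoline, no interior crossing, not aligned. -/
def FreeEdge {u v : V} (h : E.G.Adj u v) : Prop :=
  E.FreeVertex A u ∧ E.FreeVertex A v ∧ E.crossedSet A h = ∅ ∧ ¬ E.EdgeAligned A h

/-- Faces of the embedded graph. -/
def faceOf (x : Pt) : Set Pt := connectedComponentIn (E.image)ᶜ x

def IsFace (F : Set Pt) : Prop := ∃ x, x ∉ E.image ∧ F = E.faceOf x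

/-- The outer (unbounded) region. -/
def outerRegion : Set Pt := {x | x ∉ E.image ∧ ¬ Bornology.IsBounded (E.faceOf x)}

def OnOuter (v : V) : Prop := E.pos v ∈ frontier E.outerRegion

def OuterEdge {u v : V} (h : E.G.Adj u v) : Prop := E.arc h ⊆ frontier E.outerRegion

def InteriorEdge {u v : V} (h : E.G.Adj u v) : Prop := ¬ E.OuterEdge h

def IsChord {u v : V} (h : E.G.Adj u v) : Prop :=
  E.InteriorEdge h ∧ E.OnOuter u ∧ E.OnOuter v

/-- A triangulation: biconnected, all bounded faces are triangles, and the outer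
face is bounded by a simple cycle. -/
def IsTriangulation : Prop :=
  E.G.Connected ∧ (∀ v : V, (E.G.comap (Subtype.val : {w : V // w ≠ v} → V)).Connected) ∧
  (∀ F : Set Pt, E.IsFace F → Bornology.IsBounded F →
    ∃ a b c : V, a ≠ b ∧ a ≠ c ∧ b ≠ c ∧ E.G.Adj a b ∧ E.G.Adj b c ∧ E.G.Adj a c ∧
      {v : V | E.pos v ∈ frontier F} = {a, b, c}) ∧
  (∃ (v : V) (w : E.G.Walk v v), w.IsCycle ∧
    frontier E.outerRegion =
      ⋃ (x : V) (y : V) (h : E.G.Adj x y) (_ : s(x, y) ∈ w.edges), E.arc h)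

/-- Proper `k`-aligned graph. -/
def Proper : Prop :=
  (∀ {u v : V} (h : E.G.Adj u v), E.EdgeAligned A h → E.crossedSet A h = ∅) ∧
  (2 ≤ k →
    (∀ {u v : V} (h : E.G.Adj u v), E.OuterEdge h → (E.crossedSet A h).ncard = 1) ∧
    (∀ i, ∃ p q : Pt, p ≠ q ∧ frontier E.outerRegion ∩ range (A i) = {p, q}) ∧
    (∀ i j, i ≠ j → range (A i) ∩ range (A j) ∩ E.outerRegion = ∅))

/-- The set of points strictly inside a triangle of the drawing. -/
def TriInside {a b c : V} (hab : E.G.Adj a b) (hbc : E.G.Adj b c)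
    (hac : E.G.Adj a c) (x : Pt) : Prop :=
  x ∉ (E.arc hab ∪ E.arc hbc ∪ E.arc hac) ∧
    Bornology.IsBounded
      (connectedComponentIn (E.arc hab ∪ E.arc hbc ∪ E.arc hac)ᶜ x)

/-- `E` has a separating triangle. -/
def HasSepTriangle : Prop :=
  ∃ (a b c : V) (hab : E.G.Adj a b) (hbc : E.G.Adj b c) (hac : E.G.Adj a c),
    (∃ v : V, E.TriInside hab hbc hac (E.pos v)) ∧
    (∃ v : V, E.pos v ∉ (E.arc hab ∪ E.arc hbc ∪ E.arc hac) ∧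
      ¬ E.TriInside hab hbc hac (E.pos v))

end EmbeddedGraph

/-- A straight line in the plane. -/
def IsLine (l : Set Pt) : Prop :=
  ∃ p d : Pt, d ≠ 0 ∧ l = {x : Pt | ∃ t : ℝ, x = p + t • d}

/-- Stretchability of a pseudoline arrangement: some homeomorphism of the plane
takes it to a line arrangement. -/
def Stretchable {k : ℕ} (A : Fin k → ℝ → Pt) : Prop :=
  ∃ (L : Fin k → Set Pt) (h : Pt ≃ₜ Pt),
    (∀ i, IsLine (L i)) ∧ ∀ i, h '' range (A i) = L i

namespace EmbeddedGraph

variable {V : Type} (E : EmbeddedGraph V) {k : ℕ} (A : Fin k → ℝ → Pt)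

/-- A straight-line aligned drawing `(Γ, L)` of the aligned graph `(E, A)`:
a homeomorphism of the plane takes vertices to `Γ`, every arc to the
corresponding straight segment, and every pseudoline to the corresponding line. -/
def IsAlignedDrawing (Γ : V → Pt) (L : Fin k → Set Pt) : Prop :=
  (∀ i, IsLine (L i)) ∧
  ∃ h : Pt ≃ₜ Pt, (∀ v : V, h (E.pos v) = Γ v) ∧
    (∀ {u v : V} (huv : E.G.Adj u v),
      h '' E.arc huv = segment ℝ (Γ u) (Γ v)) ∧
    ∀ i, h '' range (A i) = L i

end EmbeddedGraph

/-- The union of an arrangement of curves. -/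
def arrUnion {k : ℕ} (A : Fin k → ℝ → Pt) : Set Pt := ⋃ i, range (A i)

/-- A cell of the arrangement. -/
def IsCell {k : ℕ} (A : Fin k → ℝ → Pt) (C : Set Pt) : Prop :=
  ∃ x, x ∉ arrUnion A ∧ C = connectedComponentIn (arrUnion A)ᶜ x

/-- A pseudosegment of the pseudoline `A i`: a connected component of `A i`
minus the other pseudolines. -/
def IsPseudosegment {k : ℕ} (A : Fin k → ℝ → Pt) (i : Fin k) (S : Set Pt) : Prop :=
  ∃ x, x ∈ range (A i) \ ⋃ j ∈ ({i}ᶜ : Set (Fin k)), range (A j) ∧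
    S = connectedComponentIn (range (A i) \ ⋃ j ∈ ({i}ᶜ : Set (Fin k)), range (A j)) x

/-- Biconnectivity of an abstract graph. -/
def Biconnected {V : Type} (G : SimpleGraph V) : Prop :=
  G.Connected ∧ ∀ v : V, (G.comap (Subtype.val : {w : V // w ≠ v} → V)).Connected

end

/-- If a pseudoline with respect to `E` passes through exactly
the vertices of `S`, then the subgraph induced by `S` is a linear forest:
acyclic with all degrees at most 2. -/
theorem induced_linear_forest {V : Type} (E : EmbeddedGraph V) (S : Set V)
    (h : ∃ c : ℝ → Pt, E.IsPseudoline c ∧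
      ∀ v : V, E.pos v ∈ range c ↔ v ∈ S) :
    (E.G.comap (Subtype.val : S → V)).IsAcyclic ∧
    ∀ v : S, ((E.G.comap (Subtype.val : S → V)).neighborSet v).ncard ≤ 2 := by
  obtain ⟨c, ⟨hcont, hinj, htend, hedge⟩, hmem⟩ := h
  have hproper : IsProperMap c := isProperMap_iff_tendsto_cocompact.mpr ⟨hcont, htend⟩
  have ht : ∀ v : S, ∃ r : ℝ, c r = E.pos ↑v := fun v => (hmem ↑v).mpr v.2
  choose t htc using ht
  have tinj : Function.Injective t := by
    intro a b hab
    exact Subtype.ext (E.posInj (by rw [← htc a, ← htc b, hab]))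
  -- Key lemma: every induced edge arc is the image under `c` of the interval
  -- between the parameters of its endpoints.
  have key : ∀ (u v : S) (huv : E.G.Adj ↑u ↑v), E.arc huv = c '' uIcc (t u) (t v) := by
    intro u v huv
    obtain ⟨γ, hγc, hγi, hγ0, hγ1, hγim⟩ := E.arc_curve huv
    have huvne : (↑u : V) ≠ ↑v := huv.ne
    have hposne : E.pos ↑u ≠ E.pos ↑v := fun hh => huvne (E.posInj hh)
    have h0m : (0:ℝ) ∈ Icc (0:ℝ) 1 := by norm_num
    have h1m : (1:ℝ) ∈ Icc (0:ℝ) 1 := by norm_num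
    have hu_arc : E.pos ↑u ∈ E.arc huv := by
      rw [← hγim, ← hγ0]; exact mem_image_of_mem γ h0m
    have hv_arc : E.pos ↑v ∈ E.arc huv := by
      rw [← hγim, ← hγ1]; exact mem_image_of_mem γ h1m
    have hsub : E.arc huv ⊆ range c := by
      rcases hedge huv with h' | h'
      · exact h'
      · exact absurd (h' ⟨hu_arc, (hmem ↑u).mpr u.2⟩ ⟨hv_arc, (hmem ↑v).mpr v.2⟩) hposne
    have harc_comp : IsCompact (E.arc huv) := by
      rw [← hγim]; exact isCompact_Icc.image_of_continuousOn hγc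
    have harc_conn : IsPreconnected (E.arc huv) := by
      rw [← hγim]; exact isPreconnected_Icc.image γ hγc
    set T := c ⁻¹' E.arc huv with hTdef
    have hTconn : IsPreconnected T :=
      harc_conn.preimage_of_isClosedMap hinj hproper.isClosedMap hsub
    have hTcomp : IsCompact T := hproper.isCompact_preimage harc_comp
    have htuT : t u ∈ T := by rw [hTdef, mem_preimage, htc u]; exact hu_arc
    have htvT : t v ∈ T := by rw [hTdef, mem_preimage, htc v]; exact hv_arc
    have hTicc : T = Icc (sInf T) (sSup T) :=
      eq_Icc_of_connected_compact ⟨⟨t u, htuT⟩, hTconn⟩ hTcomp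
    have hinfsup : sInf T ≤ sSup T := by
      rw [hTicc] at htuT; exact le_trans htuT.1 htuT.2
    have harc_eq : E.arc huv = c '' T := by
      rw [hTdef, image_preimage_eq_inter_range, inter_eq_left.mpr hsub]
    have hts : t u ≠ t v := fun hh => huvne (congrArg Subtype.val (tinj hh))
    have endpt : ∀ (r : ℝ), c r ∈ E.arc huv →
        IsPreconnected (E.arc huv \ {c r}) → r = sInf T ∨ r = sSup T := by
      intro r hr hconn
      by_contra hcontra
      push_neg at hcontra
      have hrT : r ∈ T := hr
      rw [hTicc] at hrT
      have hlt1 : sInf T < r := lt_of_le_of_ne hrT.1 (Ne.symm hcontra.1)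
      have hlt2 : r < sSup T := lt_of_le_of_ne hrT.2 hcontra.2
      have hset : c ⁻¹' (E.arc huv \ {c r}) = T \ {r} := by
        ext x
        simp only [mem_preimage, mem_diff, mem_singleton_iff, hTdef]
        exact and_congr_right fun _ => not_congr ⟨fun hh => hinj hh, fun hh => hh ▸ rfl⟩
      have hdiffsub : E.arc huv \ {c r} ⊆ range c := diff_subset.trans hsub
      have hs : IsPreconnected (T \ {r}) := by
        rw [← hset]
        exact hconn.preimage_of_isClosedMap hinj hproper.isClosedMap hdiffsub
      have hIs : sInf T ∈ T \ {r} := by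
        exact ⟨hTcomp.sInf_mem ⟨t u, htuT⟩, hlt1.ne⟩
      have hSs : sSup T ∈ T \ {r} := by
        exact ⟨hTcomp.sSup_mem ⟨t u, htuT⟩, hlt2.ne'⟩
      exact (hs.Icc_subset hIs hSs ⟨hlt1.le, hlt2.le⟩).2 rfl
    have hdiff_u : IsPreconnected (E.arc huv \ {E.pos ↑u}) := by
      have himg : E.arc huv \ {E.pos ↑u} = γ '' Ioc 0 1 := by
        rw [← hγim, ← hγ0]
        ext y
        constructor
        · rintro ⟨⟨x, hx, rfl⟩, hy⟩
          exact ⟨x, ⟨lt_of_le_of_ne hx.1 fun hh => hy (by rw [← hh]; exact rfl), hx.2⟩, rfl⟩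
        · rintro ⟨x, hx, rfl⟩
          refine ⟨⟨x, ⟨hx.1.le, hx.2⟩, rfl⟩, fun hy => ?_⟩
          exact hx.1.ne' (hγi ⟨hx.1.le, hx.2⟩ h0m (by simpa using hy))
      rw [himg]
      exact isPreconnected_Ioc.image γ (hγc.mono Ioc_subset_Icc_self)
    have hdiff_v : IsPreconnected (E.arc huv \ {E.pos ↑v}) := by
      have himg : E.arc huv \ {E.pos ↑v} = γ '' Ico 0 1 := by
        rw [← hγim, ← hγ1]
        ext y
        constructor
        · rintro ⟨⟨x, hx, rfl⟩, hy⟩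
          exact ⟨x, ⟨hx.1, lt_of_le_of_ne hx.2 fun hh => hy (by rw [← hh]; exact rfl)⟩, rfl⟩
        · rintro ⟨x, hx, rfl⟩
          refine ⟨⟨x, ⟨hx.1, hx.2.le⟩, rfl⟩, fun hy => ?_⟩
          exact hx.2.ne (hγi ⟨hx.1, hx.2.le⟩ h1m (by simpa using hy))
      rw [himg]
      exact isPreconnected_Ico.image γ (hγc.mono Ico_subset_Icc_self)
    have hu_end : t u = sInf T ∨ t u = sSup T :=
      endpt (t u) (by rw [htc u]; exact hu_arc) (by rw [htc u]; exact hdiff_u)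
    have hv_end : t v = sInf T ∨ t v = sSup T :=
      endpt (t v) (by rw [htc v]; exact hv_arc) (by rw [htc v]; exact hdiff_v)
    have hIcc_eq : Icc (sInf T) (sSup T) = uIcc (t u) (t v) := by
      rcases hu_end with hu' | hu' <;> rcases hv_end with hv' | hv'
      · exact absurd (hu'.trans hv'.symm) hts
      · rw [uIcc_of_le (by rw [hu', hv']; exact hinfsup), hu', hv']
      · rw [uIcc_of_ge (by rw [hu', hv']; exact hinfsup), hu', hv']
      · exact absurd (hu'.trans hv'.symm) hts
    rw [harc_eq, hTicc, hIcc_eq]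
  -- Intersections of distinct induced edge intervals at a common vertex.
  have inter : ∀ (v w1 w2 : S) (h1 : E.G.Adj ↑v ↑w1) (h2 : E.G.Adj ↑v ↑w2), w1 ≠ w2 →
      uIcc (t v) (t w1) ∩ uIcc (t v) (t w2) ⊆ {t v} := by
    intro v w1 w2 h1 h2 hne r hr
    have hedne : (s(↑v, ↑w1) : Sym2 V) ≠ s(↑v, ↑w2) := by
      intro hhe
      rcases Sym2.eq_iff.mp hhe with ⟨-, hh⟩ | ⟨hh1, hh2⟩
      · exact hne (Subtype.ext hh)
      · exact h2.ne hh1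
    have hc1 : c r ∈ E.arc h1 := by rw [key v w1 h1]; exact mem_image_of_mem c hr.1
    have hc2 : c r ∈ E.arc h2 := by rw [key v w2 h2]; exact mem_image_of_mem c hr.2
    have hmemi := E.arc_inter h1 h2 hedne ⟨hc1, hc2⟩
    simp only [mem_inter_iff, mem_insert_iff, mem_singleton_iff] at hmemi
    have e1 : r = t v ∨ r = t w1 := by
      rcases hmemi.1 with hh | hh
      · exact Or.inl (hinj (by rw [htc v]; exact hh))
      · exact Or.inr (hinj (by rw [htc w1]; exact hh))
    have e2 : r = t v ∨ r = t w2 := by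
      rcases hmemi.2 with hh | hh
      · exact Or.inl (hinj (by rw [htc v]; exact hh))
      · exact Or.inr (hinj (by rw [htc w2]; exact hh))
    rcases e1 with rfl | rfl
    · exact rfl
    · rcases e2 with hh | hh
      · exact hh
      · exact absurd (tinj hh) hne
  -- No two distinct neighbours of a vertex lie on the same strict side.
  have side : ∀ (v w1 w2 : S), w1 ≠ w2 → E.G.Adj ↑v ↑w1 → E.G.Adj ↑v ↑w2 →
      t w1 ∉ uIcc (t v) (t w2) := by
    intro v w1 w2 hne h1 h2 hmem1
    have h' : t w1 ∈ ({t v} : Set ℝ) :=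
      inter v w1 w2 h1 h2 hne ⟨right_mem_uIcc, hmem1⟩
    have : w1 = v := tinj (mem_singleton_iff.mp h')
    exact h1.ne (by rw [this])
  have sameside : ∀ (v w1 w2 : S), w1 ≠ w2 → E.G.Adj ↑v ↑w1 → E.G.Adj ↑v ↑w2 →
      ¬ ((t w1 < t v ∧ t w2 < t v) ∨ (t v < t w1 ∧ t v < t w2)) := by
    intro v w1 w2 hne h1 h2 hcase
    rcases le_total (t w1) (t w2) with hle | hle
    · rcases hcase with ⟨ha, hb⟩ | ⟨ha, hb⟩
      · exact side v w2 w1 hne.symm h2 h1 (mem_uIcc.mpr (Or.inr ⟨hle, hb.le⟩))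
      · exact side v w1 w2 hne h1 h2 (mem_uIcc.mpr (Or.inl ⟨ha.le, hle⟩))
    · rcases hcase with ⟨ha, hb⟩ | ⟨ha, hb⟩
      · exact side v w1 w2 hne h1 h2 (mem_uIcc.mpr (Or.inr ⟨hle, ha.le⟩))
      · exact side v w2 w1 hne.symm h2 h1 (mem_uIcc.mpr (Or.inl ⟨hb.le, hle⟩))
  constructor
  · -- Acyclicity
    intro v0 p hp
    have hne0 : p.support.toFinset.Nonempty :=
      ⟨v0, List.mem_toFinset.mpr p.start_mem_support⟩
    obtain ⟨m, hmF, hmax⟩ := p.support.toFinset.exists_max_image t hne0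
    have hm : m ∈ p.support := List.mem_toFinset.mp hmF
    have hq : (p.rotate m hm).IsCycle := hp.rotate hm
    have hmem' : ∀ x, x ∈ (p.rotate m hm).support → x ∈ p.support := by
      intro x hx
      rcases (SimpleGraph.Walk.mem_support_iff _).mp hx with rfl | hx'
      · exact hm
      · exact (SimpleGraph.Walk.mem_support_iff _).mpr
          (Or.inr (((p.support_rotate m hm).mem_iff).mp hx'))
    revert hq hmem'
    generalize p.rotate m hm = q
    intro hq hmem'
    cases q with
    | nil => exact SimpleGraph.Walk.IsCycle.not_of_nil hq
    | cons hadj q' =>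
      rename_i b
      have hlen : 2 ≤ q'.length := by
        have := hq.three_le_length
        simpa [SimpleGraph.Walk.length_cons] using this
      have hpath : q'.IsPath := ((SimpleGraph.Walk.cons_isCycle_iff _ _).mp hq).1
      have hnotnil : ¬ q'.reverse.Nil := by
        rw [SimpleGraph.Walk.nil_iff_length_eq, SimpleGraph.Walk.length_reverse]
        omega
      obtain ⟨a, hadj2, r2, hr2⟩ := SimpleGraph.Walk.not_nil_iff.mp hnotnil
      have hpath' : (SimpleGraph.Walk.cons hadj2 r2).IsPath := hr2 ▸ hpath.reverse
      have hab : a ≠ b := by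
        rintro rfl
        have hr2path : r2.IsPath := hpath'.of_cons
        have : r2 = SimpleGraph.Walk.nil := (SimpleGraph.Walk.isPath_iff_eq_nil (p := r2)).mp hr2path
        have hl : q'.reverse.length = 1 := by rw [hr2]; simp [this]
        rw [SimpleGraph.Walk.length_reverse] at hl
        omega
      have hbsup : b ∈ (SimpleGraph.Walk.cons hadj q').support := by
        rw [SimpleGraph.Walk.support_cons]
        exact List.mem_cons_of_mem _ q'.start_mem_support
      have hasup : a ∈ (SimpleGraph.Walk.cons hadj q').support := by
        rw [SimpleGraph.Walk.support_cons]
        refine List.mem_cons_of_mem _ ?_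
        have : a ∈ q'.reverse.support := by
          rw [hr2, SimpleGraph.Walk.support_cons]
          exact List.mem_cons_of_mem _ r2.start_mem_support
        rw [SimpleGraph.Walk.support_reverse, List.mem_reverse] at this
        exact this
      have hma : (E.G.comap (Subtype.val : S → V)).Adj m a := hadj2
      have hmb : (E.G.comap (Subtype.val : S → V)).Adj m b := hadj
      have hta : t a < t m := by
        refine lt_of_le_of_ne (hmax a (List.mem_toFinset.mpr (hmem' a hasup))) ?_
        exact fun hh => hma.ne (tinj hh).symm
      have htb : t b < t m := by
        refine lt_of_le_of_ne (hmax b (List.mem_toFinset.mpr (hmem' b hbsup))) ?_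
        exact fun hh => hmb.ne (tinj hh).symm
      exact sameside m a b hab hma hmb (Or.inl ⟨hta, htb⟩)
  · -- Degree bound
    intro v
    have hmaps : ∀ w ∈ (E.G.comap (Subtype.val : S → V)).neighborSet v,
        (fun w : S => decide (t w < t v)) w ∈ (Set.univ : Set Bool) := fun _ _ => trivial
    have hinjOn : Set.InjOn (fun w : S => decide (t w < t v))
        ((E.G.comap (Subtype.val : S → V)).neighborSet v) := by
      intro w1 hw1 w2 hw2 heq
      by_contra hnew
      have a1 : E.G.Adj ↑v ↑w1 := hw1
      have a2 : E.G.Adj ↑v ↑w2 := hw2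
      have hne1 : t w1 ≠ t v := fun hh => a1.ne (congrArg Subtype.val (tinj hh)).symm
      have hne2 : t w2 ≠ t v := fun hh => a2.ne (congrArg Subtype.val (tinj hh)).symm
      have hiff : (t w1 < t v) ↔ (t w2 < t v) := by
        simpa using decide_eq_decide.mp heq
      by_cases hlt : t w1 < t v
      · exact sameside v w1 w2 hnew a1 a2 (Or.inl ⟨hlt, hiff.mp hlt⟩)
      · have h1' : t v < t w1 := lt_of_le_of_ne (not_lt.mp hlt) hne1.symm
        have h2' : t v < t w2 :=
          lt_of_le_of_ne (not_lt.mp (fun hh => hlt (hiff.mpr hh))) hne2.symm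
        exact sameside v w1 w2 hnew a1 a2 (Or.inr ⟨h1', h2'⟩)
    calc ((E.G.comap (Subtype.val : S → V)).neighborSet v).ncard
        ≤ (Set.univ : Set Bool).ncard :=
          Set.ncard_le_ncard_of_injOn _ hmaps hinjOn Set.finite_univ
      _ = 2 := by rw [Set.ncard_univ]; simp [Nat.card_eq_fintype_card]
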